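/- Let D₀ > 0 and β > 0. The derivative with respect to the dose D of the logarithm of the multi-target survival function S(D) = 1 − (1 − e^{−D/D₀})^β tends to −1/D₀ as D → ∞; in particular, this limit is independent of the number of targets β. -/

import Mathlib

open Real Filter

/-- For the multi-target survival model `S(D) = 1 - (1 - exp(-D/D₀))^β` with
`D₀ > 0` and `β > 0`, the derivative of `ln S` tends to `-1/D₀` as `D → ∞`;
in particular this limit is independent of `β`. -/
theorem mt_log_deriv_tendsto (D₀ β : ℝ) (hD₀ : 0 < D₀) (hβ : 0 < β) :
    Tendsto
      (fun D : ℝ =>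
        deriv (fun x : ℝ => Real.log (1 - (1 - Real.exp (-x / D₀)) ^ β)) D)
      atTop (nhds (-1 / D₀)) := by
  set φ : ℝ → ℝ := fun t => β * (1 - t) ^ (β - 1) * t / (1 - (1 - t) ^ β) with hφdef
  -- Step 1: slope limit
  have hslope : Tendsto (fun t : ℝ => (1 - (1 - t) ^ β) / t)
      (nhdsWithin 0 {(0:ℝ)}ᶜ) (nhds β) := by
    have hd : HasDerivAt (fun t : ℝ => 1 - (1 - t) ^ β) β 0 := by
      have h1 : HasDerivAt (fun t : ℝ => 1 - t) (-1) 0 := by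
        simpa using (hasDerivAt_id (0:ℝ)).const_sub 1
      have h2 := h1.rpow_const (p := β) (Or.inl (by norm_num))
      have h3 := h2.const_sub 1
      convert h3 using 1
      · rfl
      · rfl
      · simp
    have h := hasDerivAt_iff_tendsto_slope.mp hd
    refine h.congr fun t => ?_
    simp [slope_def_field]
  have hnum : Tendsto (fun t : ℝ => β * (1 - t) ^ (β - 1))
      (nhdsWithin 0 {(0:ℝ)}ᶜ) (nhds β) := by
    have hc : ContinuousAt (fun t : ℝ => β * (1 - t) ^ (β - 1)) 0 := by
      refine ContinuousAt.mul continuousAt_const ?_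
      refine ContinuousAt.rpow_const ?_ (Or.inl (by norm_num))
      exact (continuous_const.sub continuous_id).continuousAt
    have := hc.tendsto
    simp only [sub_zero, Real.one_rpow, mul_one] at this
    exact this.mono_left nhdsWithin_le_nhds
  have hφ : Tendsto φ (nhdsWithin 0 {(0:ℝ)}ᶜ) (nhds 1) := by
    have h := hnum.div hslope hβ.ne'
    have : β / β = 1 := div_self hβ.ne'
    rw [this] at h
    refine h.congr fun t => ?_
    simp only [Pi.div_apply]
    rw [div_div_eq_mul_div]
  -- Step 2: e x = exp(-x/D₀) tends to 0 within {0}ᶜ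
  have he : Tendsto (fun x : ℝ => Real.exp (-x / D₀)) atTop
      (nhdsWithin 0 {(0:ℝ)}ᶜ) := by
    refine tendsto_nhdsWithin_of_tendsto_nhds_of_eventually_within _ ?_ ?_
    · refine Real.tendsto_exp_atBot.comp ?_
      exact Tendsto.atBot_div_const hD₀ tendsto_neg_atTop_atBot
    · exact Eventually.of_forall fun x => (Real.exp_pos _).ne'
  have hmain : Tendsto (fun x : ℝ => -1 / D₀ * φ (Real.exp (-x / D₀))) atTop
      (nhds (-1 / D₀)) := by
    have := (hφ.comp he).const_mul (-1 / D₀)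
    simpa using this
  -- Step 3: the derivative eventually equals -1/D₀ * φ (exp (-x/D₀))
  refine Tendsto.congr' ?_ hmain
  filter_upwards [eventually_gt_atTop 0] with x hx
  set t := Real.exp (-x / D₀) with ht
  have ht0 : 0 < t := Real.exp_pos _
  have ht1 : t < 1 := by
    rw [ht, Real.exp_lt_one_iff]
    exact div_neg_of_neg_of_pos (neg_neg_iff_pos.mpr hx) hD₀
  have hu0 : 0 < 1 - t := by linarith
  have hu1 : 1 - t < 1 := by linarith
  have hS : (1 - t) ^ β < 1 := Real.rpow_lt_one hu0.le hu1 hβ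
  have hSpos : 0 < 1 - (1 - t) ^ β := by linarith
  have h1 : HasDerivAt (fun y : ℝ => -y / D₀) (-1 / D₀) x := by
    simpa using ((hasDerivAt_id x).neg.div_const D₀)
  have h2 : HasDerivAt (fun y : ℝ => Real.exp (-y / D₀)) (t * (-1 / D₀)) x := by
    simpa [ht] using h1.exp
  have h3 : HasDerivAt (fun y : ℝ => 1 - Real.exp (-y / D₀)) (-(t * (-1 / D₀))) x :=
    h2.const_sub 1
  have h4 := h3.rpow_const (p := β) (Or.inl (by simpa [ht] using hu0.ne'))
  have h5 := h4.const_sub 1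
  have h6 := h5.log (by simpa [ht] using hSpos.ne')
  rw [h6.deriv]
  simp only [ht, hφdef]
  field_simp
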